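/- Let T be a Borel automorphism of an uncountable standard Borel space (X, 𝓑), let μ₁, …, μₙ be Borel probability measures on X and let ε > 0. Then there exist non-atomic Borel probability measures ν₁, …, νₙ on X such that for every Borel automorphism S of X with νᵢ(E(S,T)) < ε for all i = 1, …, n, there exists a Borel automorphism S₁ of X with {x ∈ X : S₁x ≠ Sx} countable and μᵢ(E(S₁,T)) < ε for all i = 1, …, n. (The quotient uniform topology τ₀ on Aut₀(X, 𝓑) = Aut(X, 𝓑)/Ctbl(X) is generated by neighborhoods defined by non-atomic measures.) -/

import Mathlib

open MeasureTheory Set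
open scoped ENNReal Classical

/-- `T` is a Borel automorphism: both `T` and its inverse are measurable. -/
def IsBorelAuto {X : Type*} [MeasurableSpace X] (T : Equiv.Perm X) : Prop :=
  Measurable T ∧ Measurable T.symm

/-- The set on which `S` and `T` (or their inverses) differ. -/
def Eset {X : Type*} (S T : Equiv.Perm X) : Set X :=
  {x | S x ≠ T x} ∪ {x | S⁻¹ x ≠ T⁻¹ x}

/-- Saturate a countable set under two permutations and their inverses. -/
lemma exists_countable_invariant {X : Type*} (A : Set X) (hA : A.Countable)
    (S T : Equiv.Perm X) :
    ∃ D : Set X, D.Countable ∧ A ⊆ D ∧ (∀ x ∈ D, S x ∈ D) ∧ (∀ x ∈ D, S.symm x ∈ D) ∧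
      (∀ x ∈ D, T x ∈ D) ∧ (∀ x ∈ D, T.symm x ∈ D) := by
  let g : Fin 4 → X → X := ![S, S.symm, T, T.symm]
  refine ⟨⋃ w : List (Fin 4), (fun x => w.foldr g x) '' A,
    countable_iUnion fun w => hA.image _, ?_, ?_, ?_, ?_, ?_⟩
  · intro x hx
    exact mem_iUnion.2 ⟨[], ⟨x, hx, rfl⟩⟩
  all_goals
    intro x hx
    obtain ⟨w, a, ha, rfl⟩ := by simpa using hx
    apply mem_iUnion.2
  · exact ⟨0 :: w, a, ha, rfl⟩
  · exact ⟨1 :: w, a, ha, rfl⟩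
  · exact ⟨2 :: w, a, ha, rfl⟩
  · exact ⟨3 :: w, a, ha, rfl⟩

/-- the quotient uniform topology `τ₀` is generated by
neighborhoods defined by non-atomic measures. -/
theorem quotient_uniform_nonatomic_base {X : Type*} [MeasurableSpace X]
    [StandardBorelSpace X] [Uncountable X]
    (T : Equiv.Perm X) (hT : IsBorelAuto T)
    (n : ℕ) (μ : Fin n → Measure X) (hμ : ∀ i, IsProbabilityMeasure (μ i))
    (ε : ℝ≥0∞) (hε : 0 < ε) :
    ∃ ν : Fin n → Measure X,
      (∀ i, IsProbabilityMeasure (ν i)) ∧ (∀ i (x : X), ν i {x} = 0) ∧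
      ∀ S : Equiv.Perm X, IsBorelAuto S → (∀ i, ν i (Eset S T) < ε) →
        ∃ S₁ : Equiv.Perm X, IsBorelAuto S₁ ∧ {x : X | S₁ x ≠ S x}.Countable ∧
          ∀ i, μ i (Eset S₁ T) < ε := by
  -- a non-atomic probability measure on X
  have hXnc : ¬Countable X := not_countable
  have hRnc : ¬Countable ℝ := not_countable
  let e : X ≃ᵐ ℝ := PolishSpace.measurableEquivOfNotCountable hXnc hRnc
  let lam : Measure X := (volume.restrict (Set.Icc (0:ℝ) 1)).map e.symm
  have lam_apply : ∀ s : Set X, MeasurableSet s →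
      lam s = volume (e.symm ⁻¹' s ∩ Set.Icc (0:ℝ) 1) := by
    intro s hs
    rw [Measure.map_apply e.symm.measurable hs, Measure.restrict_apply
      (e.symm.measurable hs)]
  have lam_univ : lam Set.univ = 1 := by
    rw [lam_apply _ MeasurableSet.univ]
    simp [Real.volume_Icc]
  have lam_prob : IsProbabilityMeasure lam := ⟨lam_univ⟩
  have lam_atom : ∀ x : X, lam {x} = 0 := by
    intro x
    rw [lam_apply _ (measurableSet_singleton x)]
    refine le_antisymm (le_trans (measure_mono (Set.inter_subset_left)) ?_) zero_le
    have : e.symm ⁻¹' ({x} : Set X) = {e x} := by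
      ext y
      simp only [Set.mem_preimage, Set.mem_singleton_iff]
      constructor
      · rintro rfl; simp
      · rintro rfl; simp
    rw [this]
    simp
  -- the set of atoms
  let A : Set X := ⋃ i, {x : X | 0 < μ i {x}}
  have hA : A.Countable := by
    refine countable_iUnion fun i => ?_
    have := Measure.countable_meas_level_set_pos₀ (μ := μ i) (g := id)
      measurable_id.nullMeasurable
    refine this.mono fun x hx => ?_
    simpa using hx
  have hAm : MeasurableSet A := hA.measurableSet
  -- the measures ν
  refine ⟨fun i => (μ i).restrict Aᶜ + (μ i A) • lam, ?_, ?_, ?_⟩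
  · intro i
    constructor
    rw [Measure.add_apply, Measure.smul_apply, Measure.restrict_apply MeasurableSet.univ,
      Set.univ_inter, lam_univ, smul_eq_mul, mul_one, add_comm,
      measure_add_measure_compl hAm]
    exact (hμ i).measure_univ
  · intro i x
    rw [Measure.add_apply, Measure.smul_apply, smul_eq_mul, lam_atom, mul_zero, add_zero,
      Measure.restrict_apply (measurableSet_singleton x)]
    rcases eq_or_ne (μ i {x}) 0 with h | h
    · exact le_antisymm (le_trans (measure_mono Set.inter_subset_left) h.le) zero_le
    · have hxA : x ∈ A := mem_iUnion.2 ⟨i, pos_iff_ne_zero.2 h⟩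
      rw [(Set.singleton_inter_eq_empty).2 (by simpa using hxA)]
      simp
  · intro S hS hν
    obtain ⟨D, hD, hAD, hSD, hSiD, hTD, hTiD⟩ := exists_countable_invariant A hA S T
    have hDm : MeasurableSet D := hD.measurableSet
    -- points outside D stay outside
    have hSc : ∀ x, x ∉ D → S x ∉ D := by
      intro x hx h
      exact hx (by simpa using hSiD _ h)
    have hSic : ∀ x, x ∉ D → S.symm x ∉ D := by
      intro x hx h
      exact hx (by simpa using hSD _ h)
    -- define S₁
    let S₁ : Equiv.Perm X :=
      { toFun := fun x => if x ∈ D then T x else S x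
        invFun := fun x => if x ∈ D then T.symm x else S.symm x
        left_inv := by
          intro x
          by_cases hx : x ∈ D
          · simp [hx, hTD _ hx]
          · simp [hx, hSc _ hx]
        right_inv := by
          intro x
          by_cases hx : x ∈ D
          · simp [hx, hTiD _ hx]
          · simp [hx, hSic _ hx] }
    have hS₁fun : (S₁ : X → X) = D.piecewise T S := by
      ext x; by_cases hx : x ∈ D <;> simp [S₁, Set.piecewise, hx]
    have hS₁inv : (S₁.symm : X → X) = D.piecewise T.symm S.symm := by
      ext x; by_cases hx : x ∈ D <;> simp [S₁, Equiv.coe_fn_symm_mk, Set.piecewise, hx]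
    refine ⟨S₁, ⟨?_, ?_⟩, ?_, ?_⟩
    · rw [hS₁fun]; exact Measurable.piecewise hDm hT.1 hS.1
    · rw [hS₁inv]; exact Measurable.piecewise hDm hT.2 hS.2
    · refine hD.mono fun x hx => ?_
      by_contra h
      exact hx (by simp [S₁, h])
    · intro i
      have hsub : Eset S₁ T ⊆ Eset S T ∩ Aᶜ := by
        intro x hx
        have hxD : x ∉ D := by
          intro hxD
          rcases hx with hx | hx
          · exact hx (by simp [S₁, hxD])
          · refine hx ?_
            show S₁.symm x = T.symm x
            simp [S₁, Equiv.coe_fn_symm_mk, hxD]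
        refine ⟨?_, fun hxA => hxD (hAD hxA)⟩
        rcases hx with hx | hx
        · exact Or.inl (by simpa [S₁, hxD] using hx)
        · refine Or.inr ?_
          have : S₁.symm x ≠ T.symm x := hx
          simpa [S₁, Equiv.coe_fn_symm_mk, hxD] using this
      calc μ i (Eset S₁ T) ≤ μ i (Eset S T ∩ Aᶜ) := measure_mono hsub
        _ ≤ ((μ i).restrict Aᶜ + (μ i A) • lam) (Eset S T) := by
            rw [Measure.add_apply, Measure.restrict_apply' hAm.compl]
            exact le_add_of_nonneg_right zero_le
        _ < ε := hν i
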